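/- If G is a finite group whose order is divisible by at least three distinct primes, and p is the largest prime divisor of |G|, then |G| − c(G) > p. -/

import Mathlib

/-- The number of cyclic subgroups of a group `G` (including the trivial subgroup). -/
noncomputable def numCyclic (G : Type*) [Group G] : ℕ :=
  Nat.card {H : Subgroup G // IsCyclic H}

/-- The number of cyclic subgroups of order `n` in a group `G`. -/
noncomputable def numCyclicOfOrder (G : Type*) [Group G] (n : ℕ) : ℕ :=
  Nat.card {H : Subgroup G // IsCyclic H ∧ Nat.card H = n}


open Pointwise

section Helpers

variable {G : Type*} [Group G]

lemma zpowers_isCyclic' (g : G) : IsCyclic (Subgroup.zpowers g) := by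
  refine ⟨⟨⟨g, Subgroup.mem_zpowers g⟩, ?_⟩⟩
  rintro ⟨x, k, rfl⟩
  exact ⟨k, by ext; simp⟩

lemma exists_zpowers_eq' (H : Subgroup G) (h : IsCyclic H) : ∃ g : G, Subgroup.zpowers g = H := by
  obtain ⟨⟨g, hg⟩, hgen⟩ := h.exists_generator
  refine ⟨g, le_antisymm (Subgroup.zpowers_le.2 hg) ?_⟩
  intro x hx
  obtain ⟨k, hk⟩ := hgen ⟨x, hx⟩
  exact ⟨k, by simpa using congrArg Subtype.val hk⟩

lemma card_conj_smul (a : MulAut G) (Q : Subgroup G) : Nat.card (a • Q : Subgroup G) = Nat.card Q := by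
  rw [Subgroup.pointwise_smul_def]
  exact (Nat.card_congr (Q.equivMapOfInjective a.toMonoidHom a.injective).toEquiv).symm

lemma smul_pow_fix {a : MulAut G} {Q : Subgroup G} (h : a • Q = Q) (k : ℕ) : a ^ k • Q = Q := by
  induction k with
  | zero => simp
  | succ n ih => rw [pow_succ, mul_smul, h, ih]

end Helpers

section Counting

variable {G : Type*} [Group G] [Fintype G]


open scoped Classical in
lemma fiber_ge (C : Subgroup G) (hC : IsCyclic C) :
    Nat.totient (Nat.card C) ≤ (Finset.univ.filter fun g : G => Subgroup.zpowers g = C).card := by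
  classical
  haveI : Fintype C := Fintype.ofFinite C
  have hcard : Nat.card C = Fintype.card C := Nat.card_eq_fintype_card
  rw [hcard]
  have h1 := IsCyclic.card_orderOf_eq_totient (α := C) (d := Fintype.card C) dvd_rfl
  rw [← h1]
  apply Finset.card_le_card_of_injOn (fun y : C => (y : G))
  · intro y hy
    simp only [Finset.mem_coe, Finset.mem_filter, Finset.mem_univ, true_and] at hy ⊢
    have hord : orderOf (y : G) = Fintype.card C := by
      rw [Subgroup.orderOf_coe]; exact hy
    apply Subgroup.eq_of_le_of_card_ge (Subgroup.zpowers_le.2 y.2)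
    rw [Nat.card_zpowers, hord, hcard]
  · exact fun a _ b _ h => Subtype.ext h

open scoped Classical in
lemma key_count (S : Finset (Subgroup G)) (hS : ∀ C ∈ S, IsCyclic C) :
    numCyclic G + ∑ C ∈ S, (Nat.totient (Nat.card C) - 1) ≤ Fintype.card G := by
  classical
  set f : G → Subgroup G := fun g => Subgroup.zpowers g with hf
  set t := Finset.univ.image f with ht
  have hmem : ∀ H : Subgroup G, H ∈ t ↔ IsCyclic H := by
    intro H
    constructor
    · intro h
      obtain ⟨g, _, rfl⟩ := Finset.mem_image.1 h
      exact zpowers_isCyclic' g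
    · intro h
      obtain ⟨g, hg⟩ := exists_zpowers_eq' H h
      exact Finset.mem_image.2 ⟨g, Finset.mem_univ g, hg⟩
  have hnum : numCyclic G = t.card := by
    rw [numCyclic, Nat.card_congr (Equiv.subtypeEquivRight fun H => (hmem H).symm),
      Nat.card_eq_fintype_card, Fintype.card_coe]
  have hST : S ⊆ t := fun C hC => (hmem C).2 (hS C hC)
  have hcard : Fintype.card G = ∑ C ∈ t, (Finset.univ.filter fun g => f g = C).card := by
    rw [← Finset.card_univ]
    exact Finset.card_eq_sum_card_fiberwise fun g _ => Finset.mem_image_of_mem f (Finset.mem_univ g)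
  have hsplit : ∑ C ∈ t \ S, (Finset.univ.filter fun g => f g = C).card
      + ∑ C ∈ S, (Finset.univ.filter fun g => f g = C).card
      = ∑ C ∈ t, (Finset.univ.filter fun g => f g = C).card := Finset.sum_sdiff hST
  have h1 : ∀ C ∈ t \ S, 1 ≤ (Finset.univ.filter fun g => f g = C).card := by
    intro C hC
    obtain ⟨g, _, hg⟩ := Finset.mem_image.1 (Finset.mem_sdiff.1 hC).1
    refine Finset.card_pos.2 ⟨g, ?_⟩
    simp [hg]
  have hb1 : (t \ S).card ≤ ∑ C ∈ t \ S, (Finset.univ.filter fun g => f g = C).card := by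
    calc (t \ S).card = ∑ _C ∈ t \ S, 1 := by simp
    _ ≤ _ := Finset.sum_le_sum h1
  have hb2 : ∑ C ∈ S, (Nat.totient (Nat.card C) - 1 + 1)
      ≤ ∑ C ∈ S, (Finset.univ.filter fun g => f g = C).card := by
    refine Finset.sum_le_sum fun C hC => ?_
    have hpos : 0 < Nat.totient (Nat.card C) :=
      Nat.totient_pos.2 Nat.card_pos
    have h2 := fiber_ge C (hS C hC)
    simp only [hf] at *
    omega
  have hsdc : (t \ S).card = t.card - S.card := Finset.card_sdiff_of_subset hST
  have hle : S.card ≤ t.card := Finset.card_le_card hST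
  have hsum : ∑ C ∈ S, (Nat.totient (Nat.card C) - 1 + 1)
      = (∑ C ∈ S, (Nat.totient (Nat.card C) - 1)) + S.card := by
    rw [Finset.sum_add_distrib]; simp
  omega

end Counting


theorem three_primes_card_sub_numCyclic (G : Type*) [Group G] [Fintype G]
    (h3 : 3 ≤ (Fintype.card G).primeFactors.card)
    (p : ℕ) (hp : p ∈ (Fintype.card G).primeFactors)
    (hmax : ∀ r ∈ (Fintype.card G).primeFactors, r ≤ p) :
    Fintype.card G - numCyclic G > p := by
  classical
  have hp' : p.Prime := Nat.prime_of_mem_primeFactors hp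
  haveI := Fact.mk hp'
  have hpd : p ∣ Fintype.card G := Nat.dvd_of_mem_primeFactors hp
  have hp5 : 5 ≤ p := by
    by_contra h5
    have hsub : (Fintype.card G).primeFactors ⊆ ({2, 3} : Finset ℕ) := by
      intro q hq
      have hq' : q.Prime := Nat.prime_of_mem_primeFactors hq
      have hqle := hmax q hq
      have h2 := hq'.two_le
      have hq4 : q ≤ 4 := by omega
      interval_cases q
      · simp
      · simp
      · norm_num at hq'
    have hc := Finset.card_le_card hsub
    have : ({2, 3} : Finset ℕ).card = 2 := by decide
    omega
  suffices hS : ∃ S : Finset (Subgroup G), (∀ C ∈ S, IsCyclic C) ∧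
      p + 1 ≤ ∑ C ∈ S, (Nat.totient (Nat.card C) - 1) by
    obtain ⟨S, hSc, hSsum⟩ := hS
    have := key_count S hSc
    omega
  obtain ⟨x, hx⟩ := exists_prime_orderOf_dvd_card p hpd
  set P := Subgroup.zpowers x with hPd
  have hPcard : Nat.card P = p := by rw [hPd, Nat.card_zpowers, hx]
  have hPcyc : IsCyclic P := zpowers_isCyclic' x
  by_cases hA : ∃ P₂ : Subgroup G, Nat.card P₂ = p ∧ P₂ ≠ P
  · obtain ⟨P₂, hP₂, hne⟩ := hA
    refine ⟨{P₂, P}, ?_, ?_⟩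
    · intro C hC
      rcases Finset.mem_insert.1 hC with rfl | hC
      · exact isCyclic_of_prime_card hP₂
      · rw [Finset.mem_singleton.1 hC]; exact hPcyc
    · rw [Finset.sum_pair hne, hPcard, hP₂, Nat.totient_prime hp']
      omega
  · push_neg at hA
    have hPfix : ∀ g : G, MulAut.conj g • P = P := fun g =>
      hA _ (by rw [card_conj_smul, hPcard])
    by_cases hq5 : ∃ q ∈ (Fintype.card G).primeFactors, q ≠ p ∧ 5 ≤ q
    · obtain ⟨q, hqmem, hqne, hq5'⟩ := hq5
      have hq' : q.Prime := Nat.prime_of_mem_primeFactors hqmem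
      haveI := Fact.mk hq'
      obtain ⟨y, hy⟩ := exists_prime_orderOf_dvd_card q (Nat.dvd_of_mem_primeFactors hqmem)
      have hQcard : Nat.card (Subgroup.zpowers y) = q := by rw [Nat.card_zpowers, hy]
      have hne : Subgroup.zpowers y ≠ P := fun h => hqne (by rw [← hQcard, h, hPcard])
      refine ⟨{Subgroup.zpowers y, P}, ?_, ?_⟩
      · intro C hC
        rcases Finset.mem_insert.1 hC with rfl | hC
        · exact zpowers_isCyclic' y
        · rw [Finset.mem_singleton.1 hC]; exact hPcyc
      · rw [Finset.sum_pair hne, hPcard, hQcard, Nat.totient_prime hp', Nat.totient_prime hq']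
        omega
    · have h3mem : 3 ∈ (Fintype.card G).primeFactors := by
        by_contra h33
        have hsub : (Fintype.card G).primeFactors ⊆ ({2, p} : Finset ℕ) := by
          intro q hq
          have hq' := Nat.prime_of_mem_primeFactors hq
          by_cases hqp : q = p
          · simp [hqp]
          · have h5 : ¬ 5 ≤ q := fun h => hq5 ⟨q, hq, hqp, h⟩
            have h2 := hq'.two_le
            have hq3 : q ≠ 3 := fun h => h33 (h ▸ hq)
            have hq4 : q ≠ 4 := by rintro rfl; norm_num at hq'
            have : q = 2 := by omega
            simp [this]
        have hc := Finset.card_le_card hsub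
        have hc2 : ({2, p} : Finset ℕ).card ≤ 2 := by
          apply le_trans (Finset.card_insert_le _ _); simp
        omega
      haveI h3p := Fact.mk (by norm_num : Nat.Prime 3)
      obtain ⟨y, hy⟩ := exists_prime_orderOf_dvd_card 3 (Nat.dvd_of_mem_primeFactors h3mem)
      set Q := Subgroup.zpowers y with hQd
      have hQcard : Nat.card Q = 3 := by rw [hQd, Nat.card_zpowers, hy]
      have hcop : Nat.Coprime p 3 := (Nat.coprime_primes hp' (by norm_num)).2 (by omega)
      by_cases hB1 : ∀ g ∈ P, MulAut.conj g • Q = Q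
      · have hxmem : x ∈ P := Subgroup.mem_zpowers x
        have hymem : y ∈ Q := Subgroup.mem_zpowers y
        have hinf : P ⊓ Q = ⊥ := Subgroup.inf_eq_bot_of_coprime (by
          rw [hPcard, hQcard]; exact hcop)
        have hcomm : Commute x y := by
          have hc1 : x * y * x⁻¹ * y⁻¹ ∈ Q := by
            have h := Subgroup.smul_mem_pointwise_smul y (MulAut.conj x) Q hymem
            rw [hB1 x hxmem] at h
            simp only [MulAut.smul_def, MulAut.conj_apply] at h
            exact Q.mul_mem h (Q.inv_mem hymem)
          have hc2 : x * y * x⁻¹ * y⁻¹ ∈ P := by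
            have h := Subgroup.smul_mem_pointwise_smul x⁻¹ (MulAut.conj y) P (P.inv_mem hxmem)
            rw [hPfix y] at h
            simp only [MulAut.smul_def, MulAut.conj_apply] at h
            have h2 := P.mul_mem hxmem h
            convert h2 using 1
            group
          have hb : x * y * x⁻¹ * y⁻¹ ∈ P ⊓ Q := ⟨hc2, hc1⟩
          rw [hinf, Subgroup.mem_bot] at hb
          have h1 : x * y * x⁻¹ = y := by rwa [mul_inv_eq_one] at hb
          show x * y = y * x
          calc x * y = (x * y * x⁻¹) * x := by group
          _ = y * x := by rw [h1]
        have hord : orderOf (x * y) = p * 3 := by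
          rw [hcomm.orderOf_mul_eq_mul_orderOf_of_coprime (by rw [hx, hy]; exact hcop), hx, hy]
        refine ⟨{Subgroup.zpowers (x * y)}, ?_, ?_⟩
        · intro C hC; rw [Finset.mem_singleton.1 hC]; exact zpowers_isCyclic' _
        · rw [Finset.sum_singleton, Nat.card_zpowers, hord,
            Nat.totient_mul hcop, Nat.totient_prime hp',
            (by decide : Nat.totient 3 = 2)]
          omega
      · push_neg at hB1
        obtain ⟨g, hgP, hgQ⟩ := hB1
        set a := MulAut.conj g with ha
        have hg1 : g ≠ 1 := by
          rintro rfl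
          apply hgQ
          rw [ha]; simp
        have hgord : orderOf g = p := by
          have hd : orderOf g ∣ p := by
            have h := Subgroup.orderOf_dvd_natCard P hgP
            rwa [hPcard] at h
          rcases (Nat.dvd_prime hp').1 hd with h | h
          · exact absurd (orderOf_eq_one_iff.1 h) hg1
          · exact h
        have hQ1card : Nat.card (a • Q : Subgroup G) = 3 := by rw [card_conj_smul, hQcard]
        have hQ2card : Nat.card (a • (a • Q) : Subgroup G) = 3 := by rw [card_conj_smul, hQ1card]
        have hne1 : a • Q ≠ Q := hgQ
        have hne2 : a • (a • Q) ≠ a • Q := fun h => hne1 (MulAction.injective a h)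
        have hne3 : a • (a • Q) ≠ Q := by
          intro h
          have h2 : a ^ 2 • Q = Q := by rw [pow_two, mul_smul, h]
          obtain ⟨k, hk⟩ := hp'.odd_of_ne_two (by omega)
          have hfix : (a ^ 2) ^ (k + 1) • Q = Q := smul_pow_fix h2 (k + 1)
          have haP : a ^ p = 1 := by
            rw [ha, ← map_pow, ← hgord, pow_orderOf_eq_one, map_one]
          have hae : (a ^ 2) ^ (k + 1) = a := by
            rw [← pow_mul, (by omega : 2 * (k + 1) = p + 1), pow_succ, haP, one_mul]
          rw [hae] at hfix
          exact hgQ hfix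
        have hP3 : ∀ R : Subgroup G, Nat.card R = 3 → R ≠ P := by
          intro R hR h
          rw [h, hPcard] at hR
          omega
        refine ⟨{P, Q, a • Q, a • (a • Q)}, ?_, ?_⟩
        · intro C hC
          simp only [Finset.mem_insert, Finset.mem_singleton] at hC
          rcases hC with rfl | rfl | rfl | rfl
          · exact hPcyc
          · exact zpowers_isCyclic' y
          · exact isCyclic_of_prime_card (p := 3) hQ1card
          · exact isCyclic_of_prime_card (p := 3) hQ2card
        · have d1 : P ∉ ({Q, a • Q, a • (a • Q)} : Finset (Subgroup G)) := by
            simp only [Finset.mem_insert, Finset.mem_singleton]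
            push_neg
            exact ⟨fun h => hP3 Q hQcard h.symm, fun h => hP3 _ hQ1card h.symm,
              fun h => hP3 _ hQ2card h.symm⟩
          have d2 : Q ∉ ({a • Q, a • (a • Q)} : Finset (Subgroup G)) := by
            simp only [Finset.mem_insert, Finset.mem_singleton]
            push_neg
            exact ⟨Ne.symm hne1, Ne.symm hne3⟩
          have d3 : a • Q ∉ ({a • (a • Q)} : Finset (Subgroup G)) := by
            simp only [Finset.mem_singleton]
            exact Ne.symm hne2
          rw [Finset.sum_insert d1, Finset.sum_insert d2, Finset.sum_insert d3,
            Finset.sum_singleton, hPcard, hQcard, hQ1card, hQ2card, Nat.totient_prime hp',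
            (by decide : Nat.totient 3 = 2)]
          omega
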